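/- Let T > 0 and let u ∈ H^1(0,T) be a nonzero function with u(0) + u(T) = 0. Then ∫₀ᵀ u'(t)² dt ≥ (π²/T²)·∫₀ᵀ u(t)² dt. -/

import Mathlib

open MeasureTheory intervalIntegral Real Set Filter Topology

private lemma abs_le_half (x : ℝ) : |x| ≤ (1 + x^2)/2 := by
  nlinarith [sq_nonneg (|x| - 1), sq_abs x, abs_nonneg x]

private lemma cs_ineq (a b : ℝ) (hab : a ≤ b) (f : ℝ → ℝ)
    (h1 : IntervalIntegrable f volume a b)
    (h2 : IntervalIntegrable (fun t => f t ^ 2) volume a b) :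
    (∫ t in a..b, f t) ^ 2 ≤ (b - a) * ∫ t in a..b, f t ^ 2 := by
  rcases eq_or_lt_of_le hab with h|h
  · subst h; simp
  · set m : ℝ := (∫ t in a..b, f t) / (b - a) with hm
    have h0 : 0 ≤ ∫ t in a..b, (f t ^2 - 2*m*f t + m^2) := by
      refine intervalIntegral.integral_nonneg hab fun t _ => by nlinarith [sq_nonneg (f t - m)]
    rw [intervalIntegral.integral_add (h2.sub (h1.const_mul (2*m))) intervalIntegrable_const,
      intervalIntegral.integral_sub h2 (h1.const_mul (2*m)),
      intervalIntegral.integral_const_mul, intervalIntegral.integral_const] at h0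
    have hL : 0 < b - a := by linarith
    rw [hm] at h0
    simp only [smul_eq_mul] at h0
    have h2 : (b-a) * (2 * ((∫ t in a..b, f t) / (b - a)) * ∫ t in a..b, f t) =
        2 * (∫ t in a..b, f t)^2 := by field_simp
    have h3 : (b-a) * ((b - a) * ((∫ t in a..b, f t) / (b - a)) ^ 2) =
        (∫ t in a..b, f t)^2 := by field_simp
    nlinarith [h0, hL]

private lemma keyR (T : ℝ) (hT : 0 < T) (u u' : ℝ → ℝ) (a c : ℝ)
    (hac : a < c) (hlen : c - a < T)
    (hcont : ContinuousOn u (Set.Icc a c))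
    (hd : ∀ t ∈ Set.Ioo a c, HasDerivAt u (u' t) t)
    (hi1 : IntervalIntegrable u' volume a c)
    (hi2 : IntervalIntegrable (fun t => u' t ^ 2) volume a c)
    (huc : u c = 0) :
    -(Real.pi/T * Real.cos (Real.pi/T*(a-c)) / Real.sin (Real.pi/T*(a-c)) * u a ^ 2)
      ≤ ∫ t in a..c, (u' t ^ 2 - (Real.pi/T)^2 * u t ^ 2) := by
  set k : ℝ := Real.pi/T with hkdef
  have hk : 0 < k := div_pos Real.pi_pos hT
  have hkT : k * T = Real.pi := by rw [hkdef]; field_simp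
  set ρ : ℝ → ℝ := fun t => k * Real.cos (k*(t-c)) / Real.sin (k*(t-c)) with hρdef
  -- sin is negative (hence nonzero) on [a, c)
  have hsin_neg : ∀ t ∈ Set.Ico a c, Real.sin (k*(t-c)) < 0 := by
    intro t ht
    apply Real.sin_neg_of_neg_of_neg_pi_lt
    · exact mul_neg_of_pos_of_neg hk (by linarith [ht.2])
    · have h1 : 0 < t - c + T := by linarith [ht.1]
      nlinarith [mul_pos hk h1]
  have hρcont : ContinuousOn ρ (Set.Ico a c) := by
    apply ContinuousOn.div
    · fun_prop
    · fun_prop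
    · exact fun t ht => (hsin_neg t ht).ne
  -- derivative of ρ
  have hρd : ∀ x ∈ Set.Ico a c, HasDerivAt ρ (-k^2 - ρ x^2) x := by
    intro x hx
    have hsx := (hsin_neg x hx).ne
    have h1 : HasDerivAt (fun t : ℝ => k*(t-c)) k x := by
      simpa using ((hasDerivAt_id x).sub_const c).const_mul k
    have hcos : HasDerivAt (fun t => k * Real.cos (k*(t-c)))
        (k * (-Real.sin (k*(x-c)) * k)) x :=
      ((Real.hasDerivAt_cos _).comp x h1).const_mul k
    have hsin : HasDerivAt (fun t => Real.sin (k*(t-c))) (Real.cos (k*(x-c)) * k) x :=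
      (Real.hasDerivAt_sin _).comp x h1
    have := hcos.div hsin hsx
    refine this.congr_deriv ?_
    symm
    have hpyth := Real.sin_sq_add_cos_sq (k*(x-c))
    simp only [hρdef]
    field_simp
  -- the pointwise FTC estimate on [a, s]
  have key1 : ∀ s ∈ Set.Ico a c, ρ s * u s^2 - ρ a * u a^2 ≤
      ∫ t in a..s, (u' t ^ 2 - k^2 * u t ^ 2) := by
    intro s hs
    have hsub : Set.Icc a s ⊆ Set.Ico a c := fun t ht => ⟨ht.1, lt_of_le_of_lt ht.2 hs.2⟩
    have hsub2 : Set.Icc a s ⊆ Set.Icc a c := fun t ht => ⟨ht.1, le_of_lt (lt_of_le_of_lt ht.2 hs.2)⟩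
    have huicc : Set.uIcc a s = Set.Icc a s := Set.uIcc_of_le hs.1
    have hucont : ContinuousOn u (Set.Icc a s) := hcont.mono hsub2
    have hρcont' : ContinuousOn ρ (Set.Icc a s) := hρcont.mono hsub
    set G' : ℝ → ℝ := fun x => (-k^2 - ρ x^2) * u x^2 + (2 * ρ x * u x) * u' x with hG'def
    have hG'int : IntervalIntegrable G' volume a s := by
      apply IntervalIntegrable.add
      · apply ContinuousOn.intervalIntegrable
        rw [huicc]
        exact ((continuousOn_const.sub (hρcont'.pow 2)).mul (hucont.pow 2))
      · apply IntervalIntegrable.continuousOn_mul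
        · exact hi1.mono_set (by rw [huicc, Set.uIcc_of_le hac.le]; exact hsub2)
        · rw [huicc]
          exact (continuousOn_const.mul hρcont').mul hucont
    have hFTC : ∫ t in a..s, G' t = ρ s * u s^2 - ρ a * u a^2 := by
      apply intervalIntegral.integral_eq_sub_of_hasDerivAt_of_le hs.1
      · exact hρcont'.mul (hucont.pow 2)
      · intro x hx
        have hx' : x ∈ Set.Ico a c := hsub ⟨le_of_lt hx.1, le_of_lt hx.2⟩
        have hux : HasDerivAt u (u' x) x := hd x ⟨hx.1, lt_of_lt_of_le hx.2 (le_of_lt hs.2)⟩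
        have := (hρd x hx').mul (hux.pow 2)
        refine this.congr_deriv ?_
        simp only [hG'def, Pi.pow_apply]
        ring
      · exact hG'int
    have hint_s : IntervalIntegrable (fun t => u' t ^2 - k^2 * u t ^2) volume a s := by
      apply IntervalIntegrable.sub
      · exact hi2.mono_set (by rw [huicc, Set.uIcc_of_le hac.le]; exact hsub2)
      · apply ContinuousOn.intervalIntegrable
        rw [huicc]
        exact continuousOn_const.mul (hucont.pow 2)
    have hpos : 0 ≤ ∫ t in a..s, (u' t ^2 - k^2 * u t ^2 - G' t) := by
      refine intervalIntegral.integral_nonneg hs.1 fun x _ => ?_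
      have : u' x ^2 - k^2 * u x ^2 - G' x = (u' x - ρ x * u x)^2 := by
        simp only [hG'def]; ring
      rw [this]; positivity
    rw [intervalIntegral.integral_sub hint_s hG'int, hFTC] at hpos
    linarith
  -- limits as s → c⁻ along l = 𝓝[Ico a c] c
  set l : Filter ℝ := nhdsWithin c (Set.Ico a c) with hldef
  haveI hlne : l.NeBot := by
    rw [hldef, ← mem_closure_iff_nhdsWithin_neBot, closure_Ico hac.ne]
    exact ⟨hac.le, le_rfl⟩
  have huicc : Set.uIcc a c = Set.Icc a c := Set.uIcc_of_le hac.le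
  have hint_ac : IntervalIntegrable (fun t => u' t ^2 - k^2 * u t ^2) volume a c := by
    apply IntervalIntegrable.sub hi2
    apply ContinuousOn.intervalIntegrable
    rw [huicc]; exact continuousOn_const.mul (hcont.pow 2)
  have hF : Tendsto (fun s => ∫ t in a..s, (u' t ^ 2 - k^2 * u t ^ 2)) l
      (𝓝 (∫ t in a..c, (u' t ^ 2 - k^2 * u t ^ 2))) := by
    have := (intervalIntegral.continuousOn_primitive_interval' hint_ac
      Set.left_mem_uIcc) c Set.right_mem_uIcc
    exact this.mono_left (nhdsWithin_mono c (by rw [huicc]; exact Set.Ico_subset_Icc_self))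
  have hI : Tendsto (fun s => ∫ t in s..c, u' t ^ 2) l (𝓝 0) := by
    have hIO : IntegrableOn (fun t => u' t ^ 2) (Set.uIcc a c) volume := by
      rw [huicc]
      exact (intervalIntegrable_iff_integrableOn_Icc_of_le hac.le).mp hi2
    have := (intervalIntegral.continuousOn_primitive_interval_left hIO) c Set.right_mem_uIcc
    have h0 : (∫ t in c..c, u' t ^ 2) = 0 := intervalIntegral.integral_same
    rw [ContinuousWithinAt] at this
    rw [h0] at this
    exact this.mono_left (nhdsWithin_mono c (by rw [huicc]; exact Set.Ico_subset_Icc_self))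
  have hg : Tendsto (fun s => ρ s * u s ^ 2) l (𝓝 0) := by
    apply squeeze_zero_norm' (a := fun s => Real.pi/2 * ∫ t in s..c, u' t ^ 2)
    · have hev1 : ∀ᶠ s in l, s ∈ Set.Ico a c := self_mem_nhdsWithin
      have hev2 : ∀ᶠ s in l, c - T/2 < s :=
        eventually_nhdsWithin_of_eventually_nhds (eventually_gt_nhds (by linarith))
      filter_upwards [hev1, hev2] with s hs hsT
      -- u s ^ 2 ≤ (c - s) * ∫_s^c u'^2
      have hsc : s ≤ c := hs.2.le
      have hi1s : IntervalIntegrable u' volume s c :=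
        hi1.mono_set (by rw [Set.uIcc_of_le hsc, Set.uIcc_of_le hac.le]
                         exact Set.Icc_subset_Icc hs.1 le_rfl)
      have hi2s : IntervalIntegrable (fun t => u' t ^ 2) volume s c :=
        hi2.mono_set (by rw [Set.uIcc_of_le hsc, Set.uIcc_of_le hac.le]
                         exact Set.Icc_subset_Icc hs.1 le_rfl)
      have hftc : ∫ t in s..c, u' t = u c - u s := by
        apply intervalIntegral.integral_eq_sub_of_hasDerivAt_of_le hsc
        · exact hcont.mono (Set.Icc_subset_Icc hs.1 le_rfl)
        · exact fun x hx => hd x ⟨lt_of_le_of_lt hs.1 hx.1, hx.2⟩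
        · exact hi1s
      have husq : u s ^ 2 ≤ (c - s) * ∫ t in s..c, u' t ^ 2 := by
        have := cs_ineq s c hsc u' hi1s hi2s
        rw [hftc, huc] at this
        calc u s ^ 2 = (0 - u s)^2 := by ring
        _ ≤ (c - s) * ∫ t in s..c, u' t ^ 2 := this
      -- |ρ s| ≤ π / (2 (c - s))
      have hcs : 0 < c - s := by linarith [hs.2]
      have hsinlb : 2/Real.pi * (k*(c-s)) ≤ Real.sin (k*(c-s)) := by
        apply Real.mul_le_sin (by positivity)
        have : k * (c - s) ≤ k * (T/2) := by
          apply mul_le_mul_of_nonneg_left (by linarith) hk.le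
        nlinarith [hkT]
      have hsin_eq : Real.sin (k*(s-c)) = -Real.sin (k*(c-s)) := by
        rw [show k*(s-c) = -(k*(c-s)) by ring, Real.sin_neg]
      have hsinpos : 0 < Real.sin (k*(c-s)) := by
        have := hsin_neg s hs
        rw [hsin_eq] at this; linarith
      have hρbound : |ρ s| ≤ Real.pi / (2*(c-s)) := by
        rw [hρdef]
        simp only
        rw [abs_div, abs_mul]
        rw [div_le_div_iff₀ (by rw [hsin_eq, abs_neg, abs_of_pos hsinpos]; exact hsinpos) (by positivity)]
        have h1 : |Real.cos (k*(s-c))| ≤ 1 := Real.abs_cos_le_one _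
        have h2 : |Real.sin (k*(s-c))| = Real.sin (k*(c-s)) := by
          rw [hsin_eq, abs_neg, abs_of_pos hsinpos]
        rw [h2, abs_of_pos hk]
        calc k * |Real.cos (k*(s-c))| * (2*(c-s)) ≤ k * 1 * (2*(c-s)) := by
              apply mul_le_mul_of_nonneg_right _ (by linarith)
              exact mul_le_mul_of_nonneg_left h1 hk.le
        _ = Real.pi * (2/Real.pi * (k * (c-s))) := by
              field_simp
        _ ≤ Real.pi * Real.sin (k*(c-s)) := by
              apply mul_le_mul_of_nonneg_left hsinlb Real.pi_pos.le
      -- combine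
      have hInn : 0 ≤ ∫ t in s..c, u' t ^ 2 :=
        intervalIntegral.integral_nonneg hsc fun x _ => sq_nonneg _
      rw [Real.norm_eq_abs, abs_mul, abs_pow, sq_abs]
      calc |ρ s| * u s ^ 2 ≤ (Real.pi / (2*(c-s))) * ((c - s) * ∫ t in s..c, u' t ^ 2) := by
            apply mul_le_mul hρbound husq (sq_nonneg _) (by positivity)
      _ = Real.pi/2 * ∫ t in s..c, u' t ^ 2 := by
            field_simp
    · simpa using hI.const_mul (Real.pi/2)
  -- conclude
  have htend : Tendsto (fun s => ρ s * u s ^2 - ρ a * u a ^2) l (𝓝 (-(ρ a * u a ^2))) := by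
    simpa using hg.sub_const (ρ a * u a ^ 2)
  refine le_of_tendsto_of_tendsto htend hF ?_
  filter_upwards [self_mem_nhdsWithin] with s hs using key1 s hs

private lemma keyL (T : ℝ) (hT : 0 < T) (u u' : ℝ → ℝ) (c b : ℝ)
    (hcb : c < b) (hlen : b - c < T)
    (hcont : ContinuousOn u (Set.Icc c b))
    (hd : ∀ t ∈ Set.Ioo c b, HasDerivAt u (u' t) t)
    (hi1 : IntervalIntegrable u' volume c b)
    (hi2 : IntervalIntegrable (fun t => u' t ^ 2) volume c b)
    (huc : u c = 0) :
    Real.pi/T * Real.cos (Real.pi/T*(b-c)) / Real.sin (Real.pi/T*(b-c)) * u b ^ 2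
      ≤ ∫ t in c..b, (u' t ^ 2 - (Real.pi/T)^2 * u t ^ 2) := by
  set v : ℝ → ℝ := fun t => u (c + b - t) with hvdef
  set v' : ℝ → ℝ := fun t => -u' (c + b - t) with hv'def
  have hmap : ∀ t ∈ Set.Icc c b, c + b - t ∈ Set.Icc c b := fun t ht =>
    ⟨by linarith [ht.2], by linarith [ht.1]⟩
  have hcontv : ContinuousOn v (Set.Icc c b) :=
    hcont.comp (by fun_prop) hmap
  have hdv : ∀ t ∈ Set.Ioo c b, HasDerivAt v (v' t) t := by
    intro t ht
    have hmem : c + b - t ∈ Set.Ioo c b := ⟨by linarith [ht.2], by linarith [ht.1]⟩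
    have hin : HasDerivAt (fun x : ℝ => c + b - x) (-1) t := by
      simpa using (hasDerivAt_id t).const_sub (c + b)
    have := (hd _ hmem).comp t hin
    refine this.congr_deriv ?_
    simp [hv'def]
  have hi1v : IntervalIntegrable v' volume c b := by
    have h0 := ((hi1.comp_sub_left (c + b)).symm).neg
    simp only [show c + b - b = c by ring, show c + b - c = b by ring] at h0
    exact h0
  have hi2v : IntervalIntegrable (fun t => v' t ^ 2) volume c b := by
    have h0 := (hi2.comp_sub_left (c + b)).symm
    simp only [show c + b - b = c by ring, show c + b - c = b by ring] at h0
    apply h0.congr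
    intro t _
    simp only [hv'def]; ring
  have hvb : v b = 0 := by simp [hvdef, show c + b - b = c by ring, huc]
  have h := keyR T hT v v' c b hcb hlen hcontv hdv hi1v hi2v hvb
  -- rewrite RHS integral
  have hRHS : (∫ t in c..b, (v' t ^ 2 - (Real.pi/T)^2 * v t ^ 2))
      = ∫ t in c..b, (u' t ^ 2 - (Real.pi/T)^2 * u t ^ 2) := by
    have h2 := intervalIntegral.integral_comp_sub_left
      (a := c) (b := b) (fun s => u' s ^ 2 - (Real.pi/T)^2 * u s ^ 2) (c+b)
    simp only [show c + b - b = c by ring, show c + b - c = b by ring] at h2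
    calc (∫ t in c..b, (v' t ^ 2 - (Real.pi/T)^2 * v t ^ 2))
        = ∫ t in c..b, (fun s => u' s ^ 2 - (Real.pi/T)^2 * u s ^ 2) (c + b - t) := by
          apply intervalIntegral.integral_congr
          intro x _
          simp only [hvdef, hv'def]; ring
    _ = _ := h2
  rw [hRHS] at h
  have hvc : v c = u b := by simp [hvdef, show c + b - c = b by ring]
  rw [hvc] at h
  have htrig : -(Real.pi/T * Real.cos (Real.pi/T*(c-b)) / Real.sin (Real.pi/T*(c-b)) * u b ^ 2)
      = Real.pi/T * Real.cos (Real.pi/T*(b-c)) / Real.sin (Real.pi/T*(b-c)) * u b ^ 2 := by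
    rw [show Real.pi/T*(c-b) = -(Real.pi/T*(b-c)) by ring, Real.cos_neg, Real.sin_neg]
    by_cases hs : Real.sin (Real.pi/T*(b-c)) = 0
    · simp [hs]
    · field_simp
  rw [htrig] at h
  exact h

theorem stmt8 (T : ℝ) (hT : 0 < T) (u u' : ℝ → ℝ)
    (hderiv : ∀ t ∈ Set.Icc (0:ℝ) T, HasDerivWithinAt u (u' t) (Set.Icc 0 T) t)
    (hint : IntervalIntegrable (fun t => (u' t) ^ 2) MeasureTheory.volume 0 T)
    (hant : u 0 + u T = 0)
    (hne : ∃ t ∈ Set.Icc (0:ℝ) T, u t ≠ 0) :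
    (Real.pi ^ 2 / T ^ 2) * ∫ t in (0:ℝ)..T, (u t) ^ 2 ≤ ∫ t in (0:ℝ)..T, (u' t) ^ 2 := by
  set k : ℝ := Real.pi / T with hkdef
  have hkT : k * T = Real.pi := by rw [hkdef]; field_simp
  have hcont : ContinuousOn u (Set.Icc 0 T) := fun t ht => (hderiv t ht).continuousWithinAt
  have hdAt : ∀ t ∈ Set.Ioo (0:ℝ) T, HasDerivAt u (u' t) t := fun t ht =>
    (hderiv t (Set.Ioo_subset_Icc_self ht)).hasDerivAt (Icc_mem_nhds ht.1 ht.2)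
  -- integrability of u'
  have hu'int : IntervalIntegrable u' volume 0 T := by
    rw [intervalIntegrable_iff_integrableOn_Ioc_of_le hT.le]
    have hres : volume.restrict (Set.Ioc (0:ℝ) T) = volume.restrict (Set.Ioo 0 T) :=
      (Measure.restrict_congr_set Ioo_ae_eq_Ioc).symm
    have hmeas : AEStronglyMeasurable u' (volume.restrict (Set.Ioc (0:ℝ) T)) := by
      rw [hres]
      apply ((measurable_deriv u).aestronglyMeasurable.restrict).congr
      rw [EventuallyEq, ae_restrict_iff' measurableSet_Ioo]
      exact Eventually.of_forall fun t ht => (hdAt t ht).deriv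
    have hsqint : IntegrableOn (fun t => u' t ^ 2) (Set.Ioc 0 T) volume :=
      (intervalIntegrable_iff_integrableOn_Ioc_of_le hT.le).mp hint
    have hbound : Integrable (fun t => (1 + u' t ^ 2)/2) (volume.restrict (Set.Ioc (0:ℝ) T)) :=
      ((integrable_const (1:ℝ)).add hsqint).div_const 2
    exact hbound.mono' hmeas (Eventually.of_forall fun t => by
      rw [Real.norm_eq_abs]; exact abs_le_half _)
  -- a zero of u
  obtain ⟨c, hcmem, hc0⟩ : ∃ c ∈ Set.Icc (0:ℝ) T, u c = 0 := by
    rcases le_or_gt (u 0) 0 with h|h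
    · have h2 : (0:ℝ) ∈ Set.Icc (u 0) (u T) := ⟨h, by linarith⟩
      obtain ⟨c, hc, hc'⟩ := intermediate_value_Icc hT.le hcont h2
      exact ⟨c, hc, hc'⟩
    · have h2 : (0:ℝ) ∈ Set.Icc (u T) (u 0) := ⟨by linarith, h.le⟩
      obtain ⟨c, hc, hc'⟩ := intermediate_value_Icc' hT.le hcont h2
      exact ⟨c, hc, hc'⟩
  -- integrability of the combined integrand on [0,T]
  have husq : IntervalIntegrable (fun t => k^2 * u t ^ 2) volume 0 T := by
    apply ContinuousOn.intervalIntegrable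
    rw [Set.uIcc_of_le hT.le]
    exact continuousOn_const.mul (hcont.pow 2)
  have hcomb : IntervalIntegrable (fun t => u' t ^ 2 - k^2 * u t ^ 2) volume 0 T :=
    hint.sub husq
  -- helper to restrict hypotheses to a subinterval
  have hmono : ∀ a b : ℝ, 0 ≤ a → a ≤ b → b ≤ T →
      ContinuousOn u (Set.Icc a b) ∧ (∀ t ∈ Set.Ioo a b, HasDerivAt u (u' t) t) ∧
      IntervalIntegrable u' volume a b ∧ IntervalIntegrable (fun t => u' t ^ 2) volume a b := by
    intro a b ha hab hbT
    have hs : Set.uIcc a b ⊆ Set.uIcc (0:ℝ) T := by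
      rw [Set.uIcc_of_le hab, Set.uIcc_of_le hT.le]
      exact Set.Icc_subset_Icc ha hbT
    refine ⟨hcont.mono (Set.Icc_subset_Icc ha hbT),
      fun t ht => hdAt t ⟨lt_of_le_of_lt ha ht.1, lt_of_lt_of_le ht.2 hbT⟩,
      hu'int.mono_set hs, hint.mono_set hs⟩
  -- main positivity
  have main : (0:ℝ) ≤ ∫ t in (0:ℝ)..T, (u' t ^ 2 - k^2 * u t ^ 2) := by
    by_cases hu0 : u 0 = 0
    · -- split at T/2, zeros at both ends
      have huT : u T = 0 := by linarith
      have h2 : (0:ℝ) < T/2 := by linarith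
      obtain ⟨hc1, hd1, hi11, hi21⟩ := hmono 0 (T/2) le_rfl h2.le (by linarith)
      obtain ⟨hc2, hd2, hi12, hi22⟩ := hmono (T/2) T h2.le (by linarith) le_rfl
      have hL := keyL T hT u u' 0 (T/2) h2 (by linarith) hc1 hd1 hi11 hi21 hu0
      have hR := keyR T hT u u' (T/2) T (by linarith) (by linarith) hc2 hd2 hi12 hi22 huT
      have e1 : Real.pi/T*(T/2 - 0) = Real.pi/2 := by field_simp; ring
      have e2 : Real.pi/T*(T/2 - T) = -(Real.pi/2) := by field_simp; ring
      rw [e1, Real.cos_pi_div_two] at hL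
      rw [e2, Real.cos_neg, Real.cos_pi_div_two] at hR
      simp only [mul_zero, zero_mul, zero_div, neg_zero] at hL hR
      have hadd := intervalIntegral.integral_add_adjacent_intervals
        (hcomb.mono_set (by rw [Set.uIcc_of_le h2.le, Set.uIcc_of_le hT.le]
                            exact Set.Icc_subset_Icc le_rfl (by linarith)))
        (hcomb.mono_set (by rw [Set.uIcc_of_le (show T/2 ≤ T by linarith), Set.uIcc_of_le hT.le]
                            exact Set.Icc_subset_Icc h2.le le_rfl))
      rw [← hadd]
      linarith
    · -- interior zero
      have huT : u T ≠ 0 := fun h => hu0 (by linarith)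
      have hc0' : 0 < c := lt_of_le_of_ne hcmem.1 (fun h => hu0 (h ▸ hc0))
      have hcT : c < T := lt_of_le_of_ne hcmem.2 (fun h => huT (h ▸ hc0))
      obtain ⟨hc1, hd1, hi11, hi21⟩ := hmono 0 c le_rfl hc0'.le hcT.le
      obtain ⟨hc2, hd2, hi12, hi22⟩ := hmono c T hc0'.le hcT.le le_rfl
      have hR := keyR T hT u u' 0 c hc0' (by linarith) hc1 hd1 hi11 hi21 hc0
      have hL := keyL T hT u u' c T hcT (by linarith) hc2 hd2 hi12 hi22 hc0
      -- trig simplifications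
      have hsin_pos : 0 < Real.sin (k*c) := by
        apply Real.sin_pos_of_pos_of_lt_pi (by positivity)
        nlinarith [hkT, mul_lt_mul_of_pos_left hcT (show (0:ℝ) < k by positivity)]
      have e1 : Real.pi/T*(0 - c) = -(k*c) := by rw [hkdef]; ring
      have e2 : Real.pi/T*(T - c) = Real.pi - k*c := by rw [hkdef]; field_simp
      rw [e1, Real.cos_neg, Real.sin_neg] at hR
      rw [e2, Real.cos_pi_sub, Real.sin_pi_sub] at hL
      have huT2 : u T ^ 2 = u 0 ^ 2 := by
        have : u T = -u 0 := by linarith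
        rw [this]; ring
      rw [huT2] at hL
      have hadd := intervalIntegral.integral_add_adjacent_intervals
        (hcomb.mono_set (by rw [Set.uIcc_of_le hc0'.le, Set.uIcc_of_le hT.le]
                            exact Set.Icc_subset_Icc le_rfl hcT.le))
        (hcomb.mono_set (by rw [Set.uIcc_of_le hcT.le, Set.uIcc_of_le hT.le]
                            exact Set.Icc_subset_Icc hc0'.le le_rfl))
      rw [← hadd]
      have halg : -(Real.pi/T * Real.cos (k*c) / -Real.sin (k*c) * u 0 ^ 2)
          + Real.pi/T * -Real.cos (k*c) / Real.sin (k*c) * u 0 ^ 2 = 0 := by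
        field_simp; ring
      linarith
  -- finish
  have hsplit : (∫ t in (0:ℝ)..T, (u' t ^ 2 - k^2 * u t ^ 2))
      = (∫ t in (0:ℝ)..T, u' t ^ 2) - k^2 * ∫ t in (0:ℝ)..T, u t ^ 2 := by
    rw [intervalIntegral.integral_sub hint husq, intervalIntegral.integral_const_mul]
  rw [hsplit] at main
  have : Real.pi ^ 2 / T ^ 2 = k ^ 2 := by rw [hkdef, div_pow]
  rw [this]
  linarith
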